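/- arXiv:1201.1969 — 4 statements merged into one kernel-verified Lean document; each statement's English description precedes it below -/
import Mathlib

section
/- Let z ∈ R be nonzero with weighted total degree t > 1, and let z' be the leading form of z. Then for every n ≥ 0, the element f_n(z) has weighted total degree d^n·t, and its leading form equals z'^{d^n}. -/
open MvPolynomial

/-- Variable index type for the ring
`R = k[ζ_1,…,ζ_N, ξ_1,…,ξ_N, a_1,…,a_{d-1}, b_0,…,b_{d-e-1}]` with `N = 2d-1-e`. -/
abbrev Vars (d e : ℕ) : Type :=
  (Fin (2 * d - 1 - e) ⊕ Fin (2 * d - 1 - e)) ⊕ (Fin (d - 1) ⊕ Fin (d - e))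

/-- The weights: `deg ζ_i = 1`, `deg ξ_i = e`, `deg a_i = d - i`, `deg b_j = d - e - j`. -/
noncomputable def wt (d e : ℕ) : Vars d e → ℕ
  | .inl (.inl _) => 1
  | .inl (.inr _) => e
  | .inr (.inl i) => d - (i.1 + 1)
  | .inr (.inr j) => d - e - j.1

variable (k : Type) [CommRing k]

/-- The critical point `ζ_i` (indexing `1 ≤ i ≤ N` by `Fin N`). -/
noncomputable def zeta (d e : ℕ) (i : Fin (2 * d - 1 - e)) : MvPolynomial (Vars d e) k :=
  X (.inl (.inl i))

/-- The critical value `ξ_i` (indexing `1 ≤ i ≤ N` by `Fin N`). -/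
noncomputable def xi (d e : ℕ) (i : Fin (2 * d - 1 - e)) : MvPolynomial (Vars d e) k :=
  X (.inl (.inr i))

/-- The coefficient `a_i`, with the conventions `a_0 = 0`, `a_d = 1`. -/
noncomputable def coefA (d e : ℕ) (i : ℕ) : MvPolynomial (Vars d e) k :=
  if i = d then 1
  else if h : 0 < i ∧ i < d then X (.inr (.inl ⟨i - 1, by omega⟩)) else 0

/-- The coefficient `b_j`, with the convention `b_{d-e} = 1`. -/
noncomputable def coefB (d e : ℕ) (j : ℕ) : MvPolynomial (Vars d e) k :=
  if j = d - e then 1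
  else if h : j < d - e then X (.inr (.inr ⟨j, h⟩)) else 0

/-- `f(z) = ∑_{i=1}^{d} a_i z^i` (note `a_0 = 0`). -/
noncomputable def fpoly (d e : ℕ) (z : MvPolynomial (Vars d e) k) : MvPolynomial (Vars d e) k :=
  ∑ i ∈ Finset.range (d + 1), coefA k d e i * z ^ i

/-- `g(z) = ∑_{j=0}^{d-e} b_j z^j`. -/
noncomputable def gpoly (d e : ℕ) (z : MvPolynomial (Vars d e) k) : MvPolynomial (Vars d e) k :=
  ∑ j ∈ Finset.range (d - e + 1), coefB k d e j * z ^ j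

/-- The pair `(f_n(z), g_n(z))` defined recursively by `f_0(z) = z`, `g_0(z) = 1`,
`f_n(z) = ∑ a_i f_{n-1}(z)^i g_{n-1}(z)^{d-i}`, `g_n(z) = ∑ b_i f_{n-1}(z)^i g_{n-1}(z)^{d-i}`. -/
noncomputable def FG (d e : ℕ) : ℕ → MvPolynomial (Vars d e) k →
    MvPolynomial (Vars d e) k × MvPolynomial (Vars d e) k
  | 0, z => (z, 1)
  | n + 1, z =>
    (∑ i ∈ Finset.range (d + 1), coefA k d e i * (FG d e n z).1 ^ i * (FG d e n z).2 ^ (d - i),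
     ∑ i ∈ Finset.range (d - e + 1),
        coefB k d e i * (FG d e n z).1 ^ i * (FG d e n z).2 ^ (d - i))

/-- The critical point equation in degree `κ`:
`∑_{i+j=κ+1} (i-j) a_i b_j - e (-1)^{N-κ} σ_{N-κ}(ζ_1,…,ζ_N)`. -/
noncomputable def critEq (d e : ℕ) (κ : ℕ) : MvPolynomial (Vars d e) k :=
  (∑ i ∈ Finset.range (d + 1), ∑ j ∈ Finset.range (d - e + 1),
      if i + j = κ + 1 then (((i : ℤ) - (j : ℤ) : ℤ) : MvPolynomial (Vars d e) k) *
        coefA k d e i * coefB k d e j else 0)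
    - (e : MvPolynomial (Vars d e) k) * (-1) ^ (2 * d - 1 - e - κ) *
      ∑ s ∈ Finset.powersetCard (2 * d - 1 - e - κ) (Finset.univ : Finset (Fin (2 * d - 1 - e))),
        ∏ i ∈ s, zeta k d e i

/-- The leading form of `p`: its weighted-homogeneous component of degree equal to its
weighted total degree. -/
noncomputable def leadForm (d e : ℕ) (p : MvPolynomial (Vars d e) k) : MvPolynomial (Vars d e) k :=
  weightedHomogeneousComponent (wt d e) (weightedTotalDegree (wt d e) p) p

section AuxDeg

variable {σ : Type*} {R : Type*} [CommRing R] {w : σ → ℕ}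

lemma aux_wtd_le_of_hom {p : MvPolynomial σ R} {n : ℕ} (hp : IsWeightedHomogeneous w p n) :
    weightedTotalDegree w p ≤ n :=
  Finset.sup_le fun c hc => le_of_eq (hp (mem_support_iff.1 hc))

lemma aux_wtd_add_le (p q : MvPolynomial σ R) :
    weightedTotalDegree w (p + q) ≤
      max (weightedTotalDegree w p) (weightedTotalDegree w q) := by
  letI := Classical.decEq σ
  apply Finset.sup_le
  intro c hc
  rcases Finset.mem_union.1 (support_add hc) with h | h
  · exact le_max_of_le_left (le_weightedTotalDegree w h)
  · exact le_max_of_le_right (le_weightedTotalDegree w h)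

lemma aux_wtd_mul_le (p q : MvPolynomial σ R) :
    weightedTotalDegree w (p * q) ≤
      weightedTotalDegree w p + weightedTotalDegree w q := by
  letI := Classical.decEq σ
  apply Finset.sup_le
  intro c hc
  obtain ⟨a, ha, b, hb, rfl⟩ := Finset.mem_add.1 (support_mul p q hc)
  rw [map_add]
  exact add_le_add (le_weightedTotalDegree w ha) (le_weightedTotalDegree w hb)

lemma aux_wtd_pow_le (p : MvPolynomial σ R) (i : ℕ) :
    weightedTotalDegree w (p ^ i) ≤ i * weightedTotalDegree w p := by
  induction i with
  | zero =>
      simpa using aux_wtd_le_of_hom (isWeightedHomogeneous_one R w)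
  | succ i ih =>
      rw [pow_succ]
      calc weightedTotalDegree w (p ^ i * p)
          ≤ weightedTotalDegree w (p ^ i) + weightedTotalDegree w p := aux_wtd_mul_le _ _
        _ ≤ i * weightedTotalDegree w p + weightedTotalDegree w p := Nat.add_le_add_right ih _
        _ = (i + 1) * weightedTotalDegree w p := by ring

lemma aux_hom_pow {p : MvPolynomial σ R} {n : ℕ} (hp : IsWeightedHomogeneous w p n) (i : ℕ) :
    IsWeightedHomogeneous w (p ^ i) (i * n) := by
  induction i with
  | zero => simpa using isWeightedHomogeneous_one R w
  | succ i ih =>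
      rw [pow_succ, Nat.succ_mul]
      exact ih.mul hp

lemma aux_wtd_sum_lt {ι : Type*} {s : Finset ι} {f : ι → MvPolynomial σ R} {B : ℕ}
    (hB : 0 < B) (h : ∀ i ∈ s, weightedTotalDegree w (f i) < B) :
    weightedTotalDegree w (∑ i ∈ s, f i) < B := by
  refine Finset.sum_induction f (fun q => weightedTotalDegree w q < B)
    (fun a b ha hb => lt_of_le_of_lt (aux_wtd_add_le a b) (max_lt ha hb)) ?_ h
  show weightedTotalDegree w (0 : MvPolynomial σ R) < B
  rw [weightedTotalDegree_zero]
  simpa using hB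

lemma aux_wtd_sum_le {ι : Type*} {s : Finset ι} {f : ι → MvPolynomial σ R} {B : ℕ}
    (h : ∀ i ∈ s, weightedTotalDegree w (f i) ≤ B) :
    weightedTotalDegree w (∑ i ∈ s, f i) ≤ B := by
  refine Finset.sum_induction f (fun q => weightedTotalDegree w q ≤ B)
    (fun a b ha hb => le_trans (aux_wtd_add_le a b) (max_le ha hb)) ?_ h
  show weightedTotalDegree w (0 : MvPolynomial σ R) ≤ B
  rw [weightedTotalDegree_zero]
  exact bot_le

/-- Key lemma: a homogeneous part plus a lower-degree remainder has the homogeneous part as its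
leading form. -/
lemma aux_key {P r : MvPolynomial σ R} {m : ℕ} (hP : IsWeightedHomogeneous w P m) (hP0 : P ≠ 0)
    (hr : weightedTotalDegree w r < m) :
    weightedTotalDegree w (P + r) = m ∧
      weightedHomogeneousComponent w m (P + r) = P := by
  have hcomp : weightedHomogeneousComponent w m (P + r) = P := by
    rw [map_add, (by rw [weightedHomogeneousComponent_of_mem (m := m) (n := m) (p := P) (by exact hP),
        if_pos rfl] : weightedHomogeneousComponent w m P = P),
      weightedHomogeneousComponent_eq_zero _ _ hr, add_zero]
  refine ⟨le_antisymm ?_ ?_, hcomp⟩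
  · exact le_trans (aux_wtd_add_le P r) (max_le (aux_wtd_le_of_hom hP) (le_of_lt hr))
  · by_contra hcon
    push_neg at hcon
    have h0 : weightedHomogeneousComponent w m (P + r) = 0 :=
      weightedHomogeneousComponent_eq_zero _ _ hcon
    rw [hcomp] at h0
    exact hP0 h0

/-- The tail of a polynomial (after removing the leading form) has strictly smaller degree. -/
lemma aux_tail_lt {p : MvPolynomial σ R} (h : 0 < weightedTotalDegree w p) :
    weightedTotalDegree w
      (p - weightedHomogeneousComponent w (weightedTotalDegree w p) p) <
      weightedTotalDegree w p := by
  classical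
  set n := weightedTotalDegree w p with hn
  show Finset.sup _ _ < n
  rw [Finset.sup_lt_iff (show (⊥ : ℕ) < n from h)]
  intro c hc
  rw [mem_support_iff, coeff_sub, coeff_weightedHomogeneousComponent] at hc
  by_cases hw : Finsupp.weight w c = n
  · rw [if_pos hw, sub_self] at hc
    exact absurd rfl hc
  · rw [if_neg hw, sub_zero] at hc
    exact lt_of_le_of_ne (le_weightedTotalDegree w (mem_support_iff.2 hc)) hw

/-- Degrees of powers of a split `P + r`. -/
lemma aux_pow_split [IsDomain R] {P r : MvPolynomial σ R} {m : ℕ}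
    (hP : IsWeightedHomogeneous w P m) (hr : weightedTotalDegree w r < m) :
    ∀ c : ℕ, 1 ≤ c → weightedTotalDegree w ((P + r) ^ c - P ^ c) < c * m := by
  intro c
  induction c with
  | zero => omega
  | succ c ih =>
      intro _
      rcases Nat.eq_zero_or_pos c with hc | hc
      · subst hc
        simpa using hr
      · have hdiff : (P + r) ^ (c + 1) - P ^ (c + 1) =
            ((P + r) ^ c - P ^ c) * P + ((P + r) ^ c - P ^ c) * r + P ^ c * r := by
          ring
        have hs := ih hc
        have hPle : weightedTotalDegree w P ≤ m := aux_wtd_le_of_hom hP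
        have h1 : weightedTotalDegree w (((P + r) ^ c - P ^ c) * P) < (c + 1) * m := by
          calc weightedTotalDegree w (((P + r) ^ c - P ^ c) * P)
              ≤ weightedTotalDegree w ((P + r) ^ c - P ^ c) + weightedTotalDegree w P :=
                aux_wtd_mul_le _ _
            _ < c * m + m := by
                have := add_lt_add_of_lt_of_le hs hPle
                omega
            _ = (c + 1) * m := by ring
        have h2 : weightedTotalDegree w (((P + r) ^ c - P ^ c) * r) < (c + 1) * m := by
          calc weightedTotalDegree w (((P + r) ^ c - P ^ c) * r)
              ≤ weightedTotalDegree w ((P + r) ^ c - P ^ c) + weightedTotalDegree w r :=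
                aux_wtd_mul_le _ _
            _ < c * m + m := by
                have := add_lt_add_of_lt_of_le hs (le_of_lt hr)
                omega
            _ = (c + 1) * m := by ring
        have h3 : weightedTotalDegree w (P ^ c * r) < (c + 1) * m := by
          calc weightedTotalDegree w (P ^ c * r)
              ≤ weightedTotalDegree w (P ^ c) + weightedTotalDegree w r := aux_wtd_mul_le _ _
            _ ≤ c * m + weightedTotalDegree w r :=
                Nat.add_le_add_right (le_trans (aux_wtd_pow_le _ _)
                  (Nat.mul_le_mul_left _ hPle)) _
            _ < c * m + m := by omega
            _ = (c + 1) * m := by ring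
        rw [hdiff]
        exact lt_of_le_of_lt (aux_wtd_add_le _ _)
          (max_lt (lt_of_le_of_lt (aux_wtd_add_le _ _) (max_lt h1 h2)) h3)

end AuxDeg

lemma coefA_hom (k : Type) [CommRing k] (d e i : ℕ) :
    IsWeightedHomogeneous (wt d e) (coefA k d e i) (d - i) := by
  unfold coefA
  split_ifs with h1 h2
  · rw [h1]
    simpa using isWeightedHomogeneous_one k (wt d e)
  · have hx := isWeightedHomogeneous_X k (wt d e)
      (Sum.inr (Sum.inl (⟨i - 1, by omega⟩ : Fin (d - 1))))
    have hwt : wt d e (Sum.inr (Sum.inl (⟨i - 1, by omega⟩ : Fin (d - 1)))) = d - i := by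
      show d - (i - 1 + 1) = d - i
      omega
    rwa [hwt] at hx
  · exact isWeightedHomogeneous_zero k _ _

lemma coefB_hom (k : Type) [CommRing k] (d e j : ℕ) :
    IsWeightedHomogeneous (wt d e) (coefB k d e j) (d - e - j) := by
  unfold coefB
  split_ifs with h1 h2
  · rw [h1]
    simpa using isWeightedHomogeneous_one k (wt d e)
  · have hx := isWeightedHomogeneous_X k (wt d e)
      (Sum.inr (Sum.inr (⟨j, h2⟩ : Fin (d - e))))
    have hwt : wt d e (Sum.inr (Sum.inr (⟨j, h2⟩ : Fin (d - e)))) = d - e - j := rfl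
    rwa [hwt] at hx
  · exact isWeightedHomogeneous_zero k _ _

lemma arithF {d i M : ℕ} (hi : i < d) (hM : 2 ≤ M) :
    (d - i) + i * M + (d - i) * (M - 2) < d * M := by
  obtain ⟨j, rfl⟩ : ∃ j, d = i + (j + 1) := ⟨d - i - 1, by omega⟩
  obtain ⟨K, rfl⟩ : ∃ K, M = K + 2 := ⟨M - 2, by omega⟩
  have h1 : i + (j + 1) - i = j + 1 := by omega
  have h2 : K + 2 - 2 = K := by omega
  rw [h1, h2]
  nlinarith

lemma arithG {d e i M : ℕ} (hi : i ≤ d - e) (he : 2 ≤ e) (hed : e ≤ d) (hM : 2 ≤ M) :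
    (d - e - i) + i * M + (d - i) * (M - 2) ≤ d * M - 2 := by
  obtain ⟨u, rfl⟩ : ∃ u, d = i + u + e := ⟨d - e - i, by omega⟩
  obtain ⟨K, rfl⟩ : ∃ K, M = K + 2 := ⟨M - 2, by omega⟩
  have h1 : i + u + e - e - i = u := by omega
  have h2 : i + u + e - i = u + e := by omega
  have h3 : K + 2 - 2 = K := by omega
  rw [h1, h2, h3]
  apply Nat.le_sub_of_add_le
  nlinarith

/-- if `z ≠ 0` has weighted total degree `t > 1` and leading form `z'`, then
for every `n ≥ 0`, `f_n(z)` has weighted total degree `d^n · t` and leading form `z'^{d^n}`. -/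
theorem stmt2 (k : Type) [Field k] (d e : ℕ) (hd : 2 ≤ d) (he : 2 ≤ e) (hed : e ≤ d)
    (z : MvPolynomial (Vars d e) k) (hz : z ≠ 0)
    (ht : 1 < weightedTotalDegree (wt d e) z) (n : ℕ) :
    weightedTotalDegree (wt d e) (FG k d e n z).1 = d ^ n * weightedTotalDegree (wt d e) z ∧
    leadForm k d e (FG k d e n z).1 = (leadForm k d e z) ^ (d ^ n) := by
  classical
  set w := wt d e with hw
  set t := weightedTotalDegree w z with hT
  have ht2 : 2 ≤ t := ht
  -- the leading form of z
  have hz'hom : IsWeightedHomogeneous w (leadForm k d e z) t :=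
    weightedHomogeneousComponent_isWeightedHomogeneous t z
  have hz'0 : leadForm k d e z ≠ 0 := by
    intro h0
    have htail := aux_tail_lt (w := w) (p := z) (by omega)
    rw [show weightedHomogeneousComponent w (weightedTotalDegree w z) z = leadForm k d e z
        from rfl, h0, sub_zero] at htail
    exact lt_irrefl _ htail
  suffices H : ∀ m : ℕ,
      (weightedTotalDegree w (FG k d e m z).1 = d ^ m * t ∧
        leadForm k d e (FG k d e m z).1 = (leadForm k d e z) ^ (d ^ m)) ∧
      weightedTotalDegree w (FG k d e m z).2 ≤ d ^ m * t - 2 by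
    exact ⟨(H n).1.1, (H n).1.2⟩
  intro m
  induction m with
  | zero =>
      refine ⟨⟨by simp [FG, hT], by simp [FG]⟩, ?_⟩
      have h1 : (FG k d e 0 z).2 = 1 := rfl
      rw [h1]
      exact le_trans (aux_wtd_le_of_hom (isWeightedHomogeneous_one k w)) (Nat.zero_le _)
  | succ m ih =>
      obtain ⟨⟨hDF, hLF⟩, hDG⟩ := ih
      set F := (FG k d e m z).1 with hF
      set G := (FG k d e m z).2 with hG
      set M := d ^ m * t with hM
      have hdm1 : 1 ≤ d ^ m := Nat.one_le_pow _ _ (by omega)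
      have hM2 : 2 ≤ M := le_trans ht2 (Nat.le_mul_of_pos_left t (by omega))
      set P := (leadForm k d e z) ^ (d ^ m) with hP
      have hPhom : IsWeightedHomogeneous w P M := aux_hom_pow hz'hom (d ^ m)
      have hP0 : P ≠ 0 := pow_ne_zero _ hz'0
      -- split F = P + (F - P)
      have hrF : weightedTotalDegree w (F - P) < M := by
        have htail := aux_tail_lt (w := w) (p := F) (by rw [hDF]; omega)
        rw [show weightedHomogeneousComponent w (weightedTotalDegree w F) F =
            leadForm k d e F from rfl, hLF] at htail
        rw [hDF] at htail
        exact htail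
      have hFsplit : F = P + (F - P) := by ring
      -- the power F ^ d
      have hpowd : weightedTotalDegree w (F ^ d - P ^ d) < d * M := by
        have := aux_pow_split (w := w) hPhom hrF d (by omega)
        rwa [← hFsplit] at this
      -- the top term of f_{m+1}
      have hlast : coefA k d e d * F ^ d * G ^ (d - d) = F ^ d := by
        simp [coefA]
      -- the rest of f_{m+1}
      have hrest : weightedTotalDegree w
          (∑ i ∈ Finset.range d, coefA k d e i * F ^ i * G ^ (d - i)) < d * M := by
        apply aux_wtd_sum_lt (by positivity)
        intro i hi
        have hi' : i < d := Finset.mem_range.1 hi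
        have hA : weightedTotalDegree w (coefA k d e i) ≤ d - i :=
          aux_wtd_le_of_hom (coefA_hom k d e i)
        have hFi : weightedTotalDegree w (F ^ i) ≤ i * M := by
          have := aux_wtd_pow_le (w := w) F i
          rwa [hDF] at this
        have hGi : weightedTotalDegree w (G ^ (d - i)) ≤ (d - i) * (M - 2) :=
          le_trans (aux_wtd_pow_le _ _) (Nat.mul_le_mul_left _ hDG)
        calc weightedTotalDegree w (coefA k d e i * F ^ i * G ^ (d - i))
            ≤ weightedTotalDegree w (coefA k d e i * F ^ i) +
              weightedTotalDegree w (G ^ (d - i)) := aux_wtd_mul_le _ _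
          _ ≤ (weightedTotalDegree w (coefA k d e i) + weightedTotalDegree w (F ^ i)) +
              weightedTotalDegree w (G ^ (d - i)) := Nat.add_le_add_right (aux_wtd_mul_le _ _) _
          _ ≤ ((d - i) + i * M) + (d - i) * (M - 2) :=
              add_le_add (add_le_add hA hFi) hGi
          _ < d * M := arithF hi' hM2
      -- decompose f_{m+1}
      have hfeq : (FG k d e (m + 1) z).1 = P ^ d +
          ((F ^ d - P ^ d) + ∑ i ∈ Finset.range d, coefA k d e i * F ^ i * G ^ (d - i)) := by
        show (∑ i ∈ Finset.range (d + 1), coefA k d e i * F ^ i * G ^ (d - i)) = _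
        rw [Finset.sum_range_succ, hlast]
        ring
      have hPd_hom : IsWeightedHomogeneous w (P ^ d) (d * M) := aux_hom_pow hPhom d
      have hPd0 : P ^ d ≠ 0 := pow_ne_zero _ hP0
      have hr_all : weightedTotalDegree w
          ((F ^ d - P ^ d) + ∑ i ∈ Finset.range d, coefA k d e i * F ^ i * G ^ (d - i)) <
          d * M := lt_of_le_of_lt (aux_wtd_add_le _ _) (max_lt hpowd hrest)
      obtain ⟨hdeg, hcomp⟩ := aux_key hPd_hom hPd0 hr_all
      rw [← hfeq] at hdeg hcomp
      have hdm : d ^ (m + 1) * t = d * M := by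
        rw [hM, pow_succ]
        ring
      have hPdeq : P ^ d = (leadForm k d e z) ^ (d ^ (m + 1)) := by
        rw [hP, ← pow_mul, ← pow_succ]
      constructor
      · constructor
        · rw [hdeg, hdm]
        · rw [leadForm, ← hw, hdeg, hcomp, hPdeq]
      · -- bound on g_{m+1}
        have hgeq : (FG k d e (m + 1) z).2 =
            ∑ i ∈ Finset.range (d - e + 1), coefB k d e i * F ^ i * G ^ (d - i) := rfl
        rw [hgeq, hdm]
        apply aux_wtd_sum_le
        intro i hi
        have hi' : i ≤ d - e := by
          have := Finset.mem_range.1 hi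
          omega
        have hB : weightedTotalDegree w (coefB k d e i) ≤ d - e - i :=
          aux_wtd_le_of_hom (coefB_hom k d e i)
        have hFi : weightedTotalDegree w (F ^ i) ≤ i * M := by
          have := aux_wtd_pow_le (w := w) F i
          rwa [hDF] at this
        have hGi : weightedTotalDegree w (G ^ (d - i)) ≤ (d - i) * (M - 2) :=
          le_trans (aux_wtd_pow_le _ _) (Nat.mul_le_mul_left _ hDG)
        calc weightedTotalDegree w (coefB k d e i * F ^ i * G ^ (d - i))
            ≤ weightedTotalDegree w (coefB k d e i * F ^ i) +
              weightedTotalDegree w (G ^ (d - i)) := aux_wtd_mul_le _ _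
          _ ≤ (weightedTotalDegree w (coefB k d e i) + weightedTotalDegree w (F ^ i)) +
              weightedTotalDegree w (G ^ (d - i)) := Nat.add_le_add_right (aux_wtd_mul_le _ _) _
          _ ≤ ((d - e - i) + i * M) + (d - i) * (M - 2) :=
              add_le_add (add_le_add hB hFi) hGi
          _ ≤ d * M - 2 := arithG hi' he hed hM2
end

section
/- Let z ∈ R be nonzero with weighted total degree t > 1, and let z' be the leading form of z. Then for every n ≥ 0, the element g_n(z) has weighted total degree (d^n − e^n)·t, and its leading form equals z'^{d^n − e^n}. -/
open MvPolynomial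

variable (k : Type) [CommRing k]

namespace Stmt3Aux

variable {k : Type} [Field k] {σ : Type} (w : σ → ℕ)

/-- generic leading form -/
noncomputable def lf (p : MvPolynomial σ k) : MvPolynomial σ k :=
  weightedHomogeneousComponent w (weightedTotalDegree w p) p

noncomputable def toPoly : MvPolynomial σ k →ₐ[k] Polynomial (MvPolynomial σ k) :=
  aeval fun v => Polynomial.C (X v) * Polynomial.X ^ w v

lemma toPoly_monomial (m : σ →₀ ℕ) (c : k) :
    toPoly w (monomial m c)
      = Polynomial.C (monomial m c) * Polynomial.X ^ (Finsupp.weight w m) := by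
  classical
  rw [toPoly, aeval_monomial]
  have h1 : (m.prod fun v n => (Polynomial.C (X v : MvPolynomial σ k) * Polynomial.X ^ w v) ^ n)
      = Polynomial.C (m.prod fun v n => (X v : MvPolynomial σ k) ^ n)
        * Polynomial.X ^ (m.sum fun v n => n * w v) := by
    rw [Finsupp.prod, Finsupp.prod, Finsupp.sum, ← Finset.prod_pow_eq_pow_sum, map_prod,
      ← Finset.prod_mul_distrib]
    apply Finset.prod_congr rfl
    intro v _
    rw [mul_pow, ← Polynomial.C_pow, ← pow_mul, mul_comm (w v) (m v)]
  rw [h1]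
  have h2 : (Finsupp.weight w m : ℕ) = m.sum fun v n => n * w v := by
    rw [Finsupp.weight_apply]
    congr 1
  rw [h2, monomial_eq, map_mul]
  rw [show (algebraMap k (Polynomial (MvPolynomial σ k))) c = Polynomial.C (C c) by
    rw [Polynomial.algebraMap_apply, MvPolynomial.algebraMap_eq]]
  ring

lemma coeff_toPoly (p : MvPolynomial σ k) (n : ℕ) :
    (toPoly w p).coeff n = weightedHomogeneousComponent w n p := by
  classical
  induction p using MvPolynomial.induction_on' with
  | monomial m c =>
    rw [toPoly_monomial, Polynomial.coeff_C_mul, Polynomial.coeff_X_pow]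
    ext d
    rw [coeff_weightedHomogeneousComponent]
    by_cases hdm : m = d
    · subst hdm
      by_cases h : n = Finsupp.weight w m
      · simp [h, coeff_monomial]
      · simp [h, coeff_monomial, Ne.symm h]
    · split_ifs <;> simp [coeff_monomial, hdm]
  | add p q hp hq => simp [map_add, hp, hq]

lemma whc_top_ne_zero {p : MvPolynomial σ k} (hp : p ≠ 0) :
    weightedHomogeneousComponent w (weightedTotalDegree w p) p ≠ 0 := by
  classical
  obtain ⟨m, hm, hm2⟩ := Finset.exists_mem_eq_sup p.support
    (support_nonempty.mpr hp) fun s => Finsupp.weight w s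
  intro h
  have h2 := coeff_weightedHomogeneousComponent (w := w)
    (n := weightedTotalDegree w p) (φ := p) m
  rw [h, coeff_zero] at h2
  have hw : Finsupp.weight w m = weightedTotalDegree w p := hm2.symm
  rw [if_pos hw] at h2
  exact (mem_support_iff.mp hm) h2.symm

lemma natDegree_toPoly {p : MvPolynomial σ k} (hp : p ≠ 0) :
    (toPoly w p).natDegree = weightedTotalDegree w p := by
  apply le_antisymm
  · rw [Polynomial.natDegree_le_iff_coeff_eq_zero]
    intro m hm
    rw [coeff_toPoly]
    exact weightedHomogeneousComponent_eq_zero m p hm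
  · apply Polynomial.le_natDegree_of_ne_zero
    rw [coeff_toPoly]
    exact whc_top_ne_zero w hp

lemma toPoly_ne_zero {p : MvPolynomial σ k} (hp : p ≠ 0) : toPoly w p ≠ 0 := by
  intro h
  apply whc_top_ne_zero w hp
  rw [← coeff_toPoly, h, Polynomial.coeff_zero]

lemma leadingCoeff_toPoly {p : MvPolynomial σ k} (hp : p ≠ 0) :
    (toPoly w p).leadingCoeff = lf w p := by
  rw [Polynomial.leadingCoeff, natDegree_toPoly w hp, coeff_toPoly, lf]

lemma D_zero : weightedTotalDegree w (0 : MvPolynomial σ k) = 0 := by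
  simp [weightedTotalDegree_zero]

lemma D_one : weightedTotalDegree w (1 : MvPolynomial σ k) = 0 := by
  classical
  refine le_antisymm (Finset.sup_le ?_) (Nat.zero_le _)
  intro m hm
  rw [mem_support_iff, coeff_one] at hm
  by_cases h : (0 : σ →₀ ℕ) = m
  · rw [← h]; simp
  · simp [h] at hm

lemma lf_one : lf w (1 : MvPolynomial σ k) = 1 := by
  rw [lf, D_one]
  exact (isWeightedHomogeneous_one k w).weightedHomogeneousComponent_same

lemma D_X (v : σ) : weightedTotalDegree w (X v : MvPolynomial σ k) = w v := by
  classical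
  show (X v : MvPolynomial σ k).support.sup (fun s => Finsupp.weight w s) = w v
  rw [support_X, Finset.sup_singleton]
  simp [Finsupp.weight_apply, Finsupp.sum_single_index]

lemma D_mul {p q : MvPolynomial σ k} (hp : p ≠ 0) (hq : q ≠ 0) :
    weightedTotalDegree w (p * q) = weightedTotalDegree w p + weightedTotalDegree w q := by
  rw [← natDegree_toPoly w (mul_ne_zero hp hq), ← natDegree_toPoly w hp,
    ← natDegree_toPoly w hq, map_mul]
  exact Polynomial.natDegree_mul (toPoly_ne_zero w hp) (toPoly_ne_zero w hq)

lemma lf_mul {p q : MvPolynomial σ k} (hp : p ≠ 0) (hq : q ≠ 0) :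
    lf w (p * q) = lf w p * lf w q := by
  rw [← leadingCoeff_toPoly w (mul_ne_zero hp hq), ← leadingCoeff_toPoly w hp,
    ← leadingCoeff_toPoly w hq, map_mul, Polynomial.leadingCoeff_mul]

lemma D_pow {p : MvPolynomial σ k} (hp : p ≠ 0) (m : ℕ) :
    weightedTotalDegree w (p ^ m) = m * weightedTotalDegree w p := by
  induction m with
  | zero => simp [D_one]
  | succ m ih => rw [pow_succ, D_mul w (pow_ne_zero m hp) hp, ih]; ring

lemma lf_pow {p : MvPolynomial σ k} (hp : p ≠ 0) (m : ℕ) :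
    lf w (p ^ m) = (lf w p) ^ m := by
  induction m with
  | zero => simp [lf_one]
  | succ m ih => rw [pow_succ, lf_mul w (pow_ne_zero m hp) hp, ih, pow_succ]

lemma add_dominant {p q : MvPolynomial σ k} (hp : p ≠ 0)
    (hq : q = 0 ∨ weightedTotalDegree w q < weightedTotalDegree w p) :
    q + p ≠ 0 ∧ weightedTotalDegree w (q + p) = weightedTotalDegree w p ∧
      lf w (q + p) = lf w p := by
  rcases hq with rfl | hq
  · simpa using hp
  by_cases hq0 : q = 0
  · simpa [hq0] using hp
  have hdeg : (toPoly w q).degree < (toPoly w p).degree := by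
    rw [Polynomial.degree_eq_natDegree (toPoly_ne_zero w hq0),
        Polynomial.degree_eq_natDegree (toPoly_ne_zero w hp)]
    exact_mod_cast by rw [natDegree_toPoly w hq0, natDegree_toPoly w hp]; exact hq
  have hd2 : (toPoly w q + toPoly w p).degree = (toPoly w p).degree :=
    Polynomial.degree_add_eq_right_of_degree_lt hdeg
  have hne : q + p ≠ 0 := by
    intro h
    have h0 : toPoly w q + toPoly w p = 0 := by rw [← map_add, h, map_zero]
    rw [h0, Polynomial.degree_zero] at hd2
    exact toPoly_ne_zero w hp (Polynomial.degree_eq_bot.mp hd2.symm)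
  refine ⟨hne, ?_, ?_⟩
  · rw [← natDegree_toPoly w hne, ← natDegree_toPoly w hp, map_add]
    exact Polynomial.natDegree_eq_of_degree_eq hd2
  · rw [← leadingCoeff_toPoly w hne, ← leadingCoeff_toPoly w hp, map_add,
      Polynomial.leadingCoeff_add_of_degree_lt hdeg]

lemma D_sum_lt {ι : Type*} {s : Finset ι} {f : ι → MvPolynomial σ k} {B : ℕ} (hB : 0 < B)
    (h : ∀ i ∈ s, weightedTotalDegree w (f i) < B) :
    weightedTotalDegree w (∑ i ∈ s, f i) < B := by
  classical
  have key : ∀ m ∈ (∑ i ∈ s, f i).support, Finsupp.weight w m < B := by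
    intro m hm
    obtain ⟨i, hi, hmi⟩ := Finset.mem_biUnion.mp (MvPolynomial.support_sum hm)
    exact lt_of_le_of_lt (le_weightedTotalDegree w hmi) (h i hi)
  exact (Finset.sup_lt_iff hB).mpr key

lemma arith1 {d i A E t : ℕ} (hi : i < d) (hE : 1 ≤ E) (hEA : E ≤ A) (ht : 2 ≤ t) :
    (d - i) + i * (A * t) + (d - i) * ((A - E) * t) < d * (A * t) := by
  obtain ⟨j, rfl⟩ : ∃ j, d = i + (j + 1) := ⟨d - i - 1, by omega⟩
  obtain ⟨C, rfl⟩ : ∃ C, A = E + C := ⟨A - E, by omega⟩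
  rw [show i + (j + 1) - i = j + 1 by omega, show E + C - E = C by omega]
  have key : j + 1 < (j + 1) * (E * t) := by
    have h5 : 2 ≤ E * t := by nlinarith
    calc j + 1 < (j + 1) * 2 := by omega
    _ ≤ (j + 1) * (E * t) := Nat.mul_le_mul_left _ h5
  nlinarith [key]

lemma arith2 {d e i A E t : ℕ} (hi : i < d - e) (hE : 1 ≤ E) (hEA : E ≤ A) (ht : 2 ≤ t) :
    (d - e - i) + i * (A * t) + (d - i) * ((A - E) * t) < (d * A - e * E) * t := by
  obtain ⟨j, rfl⟩ : ∃ j, d = e + i + (j + 1) := ⟨d - e - i - 1, by omega⟩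
  obtain ⟨C, rfl⟩ : ∃ C, A = E + C := ⟨A - E, by omega⟩
  rw [show e + i + (j + 1) - e - i = j + 1 by omega, show E + C - E = C by omega,
    show e + i + (j + 1) - i = e + (j + 1) by omega,
    Nat.sub_eq_of_eq_add (show (e + i + (j + 1)) * (E + C)
      = (e * C + (i + (j + 1)) * (E + C)) + e * E by ring)]
  have key : j + 1 < (j + 1) * (E * t) := by
    have h5 : 2 ≤ E * t := by nlinarith
    calc j + 1 < (j + 1) * 2 := by omega
    _ ≤ (j + 1) * (E * t) := Nat.mul_le_mul_left _ h5
  nlinarith [key]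

lemma arith3 {d e A E : ℕ} (t : ℕ) (hed : e ≤ d) (hEA : E ≤ A) :
    (d - e) * (A * t) + e * ((A - E) * t) = (d * A - e * E) * t := by
  obtain ⟨c, rfl⟩ : ∃ c, d = e + c := ⟨d - e, by omega⟩
  obtain ⟨C, rfl⟩ : ∃ C, A = E + C := ⟨A - E, by omega⟩
  rw [Nat.add_sub_cancel_left, Nat.add_sub_cancel_left,
    Nat.sub_eq_of_eq_add (show (e + c) * (E + C) = (e * C + c * (E + C)) + e * E by ring)]
  ring



end Stmt3Aux


section Main

open Stmt3Aux

theorem keyFG (k : Type) [Field k] (d e : ℕ) (hd : 2 ≤ d) (he : 2 ≤ e) (hed : e ≤ d)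
    (z : MvPolynomial (Vars d e) k) (hz : z ≠ 0)
    (ht : 1 < weightedTotalDegree (wt d e) z) (n : ℕ) :
    (FG k d e n z).1 ≠ 0 ∧
    weightedTotalDegree (wt d e) (FG k d e n z).1
      = d ^ n * weightedTotalDegree (wt d e) z ∧
    lf (wt d e) (FG k d e n z).1 = (lf (wt d e) z) ^ (d ^ n) ∧
    (FG k d e n z).2 ≠ 0 ∧
    weightedTotalDegree (wt d e) (FG k d e n z).2
      = (d ^ n - e ^ n) * weightedTotalDegree (wt d e) z ∧
    lf (wt d e) (FG k d e n z).2 = (lf (wt d e) z) ^ (d ^ n - e ^ n) := by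
  set w := wt d e
  set t := weightedTotalDegree w z with htdef
  have ht2 : 2 ≤ t := ht
  induction n with
  | zero =>
    refine ⟨hz, by simp [FG, htdef], by simp [FG], one_ne_zero, by simp [FG, D_one], by simp [FG, lf_one]⟩
  | succ n ih =>
    obtain ⟨hF0, hDF, hLF, hG0, hDG, hLG⟩ := ih
    set F := (FG k d e n z).1
    set G := (FG k d e n z).2
    set A := d ^ n with hA
    set E := e ^ n with hE
    have hEA : E ≤ A := Nat.pow_le_pow_left hed n
    have hE1 : 1 ≤ E := Nat.one_le_pow n e (by omega)
    have hA1 : 1 ≤ A := le_trans hE1 hEA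
    -- the f-component
    have hsplit1 : (FG k d e (n + 1) z).1
        = (∑ i ∈ Finset.range d, coefA k d e i * F ^ i * G ^ (d - i))
          + coefA k d e d * F ^ d * G ^ (d - d) := by
      show (∑ i ∈ Finset.range (d + 1), coefA k d e i * F ^ i * G ^ (d - i)) = _
      rw [Finset.sum_range_succ]
    have htop1 : coefA k d e d * F ^ d * G ^ (d - d) = F ^ d := by
      simp [coefA, Nat.sub_self]
    have hDFd : weightedTotalDegree w (F ^ d) = d * (A * t) := by
      rw [D_pow w hF0 d, hDF]
    have hBpos : 0 < d * (A * t) := by positivity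
    have hrest1 : ∀ i ∈ Finset.range d,
        weightedTotalDegree w (coefA k d e i * F ^ i * G ^ (d - i)) < d * (A * t) := by
      intro i hi
      rw [Finset.mem_range] at hi
      rcases Nat.eq_zero_or_pos i with rfl | hipos
      · have : coefA k d e 0 = 0 := by
          simp only [coefA]
          rw [if_neg (by omega)]
          rw [dif_neg (by omega)]
        rw [this, zero_mul, zero_mul, D_zero]
        exact hBpos
      · have hca : coefA k d e i
            = X (.inr (.inl ⟨i - 1, by omega⟩)) := by
          simp only [coefA]
          rw [if_neg (by omega), dif_pos ⟨hipos, hi⟩]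
        have hXne : (X (.inr (.inl (⟨i - 1, by omega⟩ : Fin (d-1))) : Vars d e)
            : MvPolynomial (Vars d e) k) ≠ 0 := X_ne_zero _
        have hterm : weightedTotalDegree w (coefA k d e i * F ^ i * G ^ (d - i))
            = (d - i) + i * (A * t) + (d - i) * ((A - E) * t) := by
          rw [hca]
          rw [D_mul w (mul_ne_zero hXne (pow_ne_zero i hF0)) (pow_ne_zero _ hG0)]
          rw [D_mul w hXne (pow_ne_zero i hF0)]
          rw [D_pow w hF0 i]
          rw [D_pow w hG0 (d - i)]
          rw [hDF, hDG]
          have : w (.inr (.inl (⟨i - 1, by omega⟩ : Fin (d-1)))) = d - i := by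
            show d - (i - 1 + 1) = d - i
            omega
          rw [D_X, this]
        rw [hterm]
        exact arith1 hi hE1 hEA ht2
    have hdom1 := add_dominant w (p := F ^ d)
      (q := ∑ i ∈ Finset.range d, coefA k d e i * F ^ i * G ^ (d - i))
      (pow_ne_zero d hF0)
      (Or.inr (by rw [hDFd]; exact D_sum_lt w hBpos hrest1))
    rw [htop1] at hsplit1
    rw [← hsplit1] at hdom1
    obtain ⟨hne1, hD1, hL1⟩ := hdom1
    -- the g-component
    have hsplit2 : (FG k d e (n + 1) z).2
        = (∑ i ∈ Finset.range (d - e), coefB k d e i * F ^ i * G ^ (d - i))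
          + coefB k d e (d - e) * F ^ (d - e) * G ^ (d - (d - e)) := by
      show (∑ i ∈ Finset.range (d - e + 1), coefB k d e i * F ^ i * G ^ (d - i)) = _
      rw [Finset.sum_range_succ]
    have htop2 : coefB k d e (d - e) * F ^ (d - e) * G ^ (d - (d - e))
        = F ^ (d - e) * G ^ e := by
      rw [show d - (d - e) = e by omega]
      simp [coefB]
    have hptne : F ^ (d - e) * G ^ e ≠ 0 :=
      mul_ne_zero (pow_ne_zero _ hF0) (pow_ne_zero _ hG0)
    have hDp2 : weightedTotalDegree w (F ^ (d - e) * G ^ e) = (d * A - e * E) * t := by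
      rw [D_mul w (pow_ne_zero _ hF0) (pow_ne_zero _ hG0), D_pow w hF0, D_pow w hG0,
        hDF, hDG]
      exact arith3 t hed hEA
    have hLp2 : lf w (F ^ (d - e) * G ^ e) = (lf w z) ^ (d * A - e * E) := by
      rw [lf_mul w (pow_ne_zero _ hF0) (pow_ne_zero _ hG0), lf_pow w hF0, lf_pow w hG0,
        hLF, hLG, ← pow_mul, ← pow_mul, ← pow_add]
      congr 1
      have := arith3 (d := d) (e := e) 1 hed hEA
      simpa [mul_comm] using this
    have hq2 : (∑ i ∈ Finset.range (d - e), coefB k d e i * F ^ i * G ^ (d - i)) = 0 ∨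
        weightedTotalDegree w (∑ i ∈ Finset.range (d - e), coefB k d e i * F ^ i * G ^ (d - i))
          < weightedTotalDegree w (F ^ (d - e) * G ^ e) := by
      rcases eq_or_lt_of_le hed with rfl | hlt
      · left
        simp
      · right
        rw [hDp2]
        have hB2 : 0 < (d * A - e * E) * t := by
          have h1 : e * E ≤ e * A := Nat.mul_le_mul_left e hEA
          have h2 : e * A < d * A := (Nat.mul_lt_mul_right (by omega : 0 < A)).mpr hlt
          have h3 : 0 < t := by omega
          have h4 : 0 < d * A - e * E := by omega
          exact Nat.mul_pos h4 h3
        apply D_sum_lt w hB2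
        intro i hi
        rw [Finset.mem_range] at hi
        have hcb : coefB k d e i = X (.inr (.inr ⟨i, hi⟩)) := by
          simp only [coefB]
          rw [if_neg (by omega), dif_pos hi]
        have hXne : (X (.inr (.inr (⟨i, hi⟩ : Fin (d - e))) : Vars d e)
            : MvPolynomial (Vars d e) k) ≠ 0 := X_ne_zero _
        have hterm : weightedTotalDegree w (coefB k d e i * F ^ i * G ^ (d - i))
            = (d - e - i) + i * (A * t) + (d - i) * ((A - E) * t) := by
          rw [hcb, D_mul w (mul_ne_zero hXne (pow_ne_zero i hF0)) (pow_ne_zero _ hG0),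
            D_mul w hXne (pow_ne_zero i hF0), D_pow w hF0, D_pow w hG0, hDF, hDG]
          have : w (.inr (.inr (⟨i, hi⟩ : Fin (d - e)))) = d - e - i := rfl
          rw [D_X, this]
        rw [hterm]
        exact arith2 hi hE1 hEA ht2
    have hdom2 := add_dominant w (p := F ^ (d - e) * G ^ e)
      (q := ∑ i ∈ Finset.range (d - e), coefB k d e i * F ^ i * G ^ (d - i)) hptne hq2
    rw [htop2] at hsplit2
    rw [← hsplit2] at hdom2
    obtain ⟨hne2, hD2, hL2⟩ := hdom2
    have hpowd : d ^ (n + 1) = d * A := by rw [pow_succ]; ring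
    have hpowe : e ^ (n + 1) = e * E := by rw [pow_succ]; ring
    refine ⟨hne1, ?_, ?_, hne2, ?_, ?_⟩
    · rw [hD1, hDFd, hpowd]; ring
    · rw [hL1, lf_pow w hF0, hLF, ← pow_mul, hpowd]; ring_nf
    · rw [hD2, hDp2, hpowd, hpowe]
    · rw [hL2, hLp2, hpowd, hpowe]

end Main

/-- if `z ≠ 0` has weighted total degree `t > 1` and leading form `z'`, then
for every `n ≥ 0`, `g_n(z)` has weighted total degree `(d^n - e^n) · t` and leading form
`z'^{d^n - e^n}`. -/
theorem stmt3 (k : Type) [Field k] (d e : ℕ) (hd : 2 ≤ d) (he : 2 ≤ e) (hed : e ≤ d)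
    (z : MvPolynomial (Vars d e) k) (hz : z ≠ 0)
    (ht : 1 < weightedTotalDegree (wt d e) z) (n : ℕ) :
    weightedTotalDegree (wt d e) (FG k d e n z).2 =
      (d ^ n - e ^ n) * weightedTotalDegree (wt d e) z ∧
    leadForm k d e (FG k d e n z).2 = (leadForm k d e z) ^ (d ^ n - e ^ n) := by
  obtain ⟨-, -, -, -, h1, h2⟩ := keyFG k d e hd he hed z hz ht n
  exact ⟨h1, h2⟩
end

section
/- Let n > m ≥ 1 be integers and let 1 ≤ i ≤ N. Then the element P_i = f_{m−1}(ξ_i)·g_{n−1}(ξ_i) − f_{n−1}(ξ_i)·g_{m−1}(ξ_i) of R has weighted total degree e·(d^{n−1} + d^{m−1} − e^{m−1}), and its leading form equals −ξ_i^{d^{n−1} + d^{m−1} − e^{m−1}}. -/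
open MvPolynomial

variable (k : Type) [CommRing k]

namespace Stmt4Aux

variable {σ : Type*} {K : Type*} [CommRing K]

/-- Every monomial of `p` has weighted degree `< N`. -/
def DegLt (w : σ → ℕ) (p : MvPolynomial σ K) (N : ℕ) : Prop :=
  ∀ s ∈ p.support, Finsupp.weight w s < N

/-- Every monomial of `p` has weighted degree `≤ N`. -/
def DegLe (w : σ → ℕ) (p : MvPolynomial σ K) (N : ℕ) : Prop :=
  ∀ s ∈ p.support, Finsupp.weight w s ≤ N

variable {w : σ → ℕ}

theorem DegLt.degLe {p : MvPolynomial σ K} {N : ℕ} (h : DegLt w p N) : DegLe w p N :=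
  fun s hs => le_of_lt (h s hs)

theorem DegLt.zero (N : ℕ) : DegLt w (0 : MvPolynomial σ K) N := by
  intro s hs; simp at hs

theorem DegLe.mono {p : MvPolynomial σ K} {N N' : ℕ} (h : DegLe w p N) (hN : N ≤ N') :
    DegLe w p N' := fun s hs => le_trans (h s hs) hN

theorem DegLt.mono {p : MvPolynomial σ K} {N N' : ℕ} (h : DegLt w p N) (hN : N ≤ N') :
    DegLt w p N' := fun s hs => lt_of_lt_of_le (h s hs) hN

theorem DegLe.of_lt {p : MvPolynomial σ K} {N N' : ℕ} (h : DegLe w p N) (hN : N < N') :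
    DegLt w p N' := fun s hs => lt_of_le_of_lt (h s hs) hN

theorem DegLt.add {p q : MvPolynomial σ K} {N : ℕ} (hp : DegLt w p N) (hq : DegLt w q N) :
    DegLt w (p + q) N := by
  classical
  intro s hs
  rcases Finset.mem_union.1 (MvPolynomial.support_add hs) with h | h
  · exact hp s h
  · exact hq s h

theorem DegLt.neg {p : MvPolynomial σ K} {N : ℕ} (hp : DegLt w p N) : DegLt w (-p) N := by
  intro s hs
  rw [MvPolynomial.support_neg] at hs
  exact hp s hs

theorem DegLe.mul {p q : MvPolynomial σ K} {A B : ℕ} (hp : DegLe w p A) (hq : DegLe w q B) :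
    DegLe w (p * q) (A + B) := by
  classical
  intro s hs
  rcases Finset.mem_add.1 (MvPolynomial.support_mul p q hs) with ⟨a, ha, b, hb, rfl⟩
  rw [map_add]
  exact add_le_add (hp a ha) (hq b hb)

theorem DegLe.mul_lt {p q : MvPolynomial σ K} {A B : ℕ} (hp : DegLe w p A) (hq : DegLt w q B) :
    DegLt w (p * q) (A + B) := by
  classical
  intro s hs
  rcases Finset.mem_add.1 (MvPolynomial.support_mul p q hs) with ⟨a, ha, b, hb, rfl⟩
  rw [map_add]
  exact add_lt_add_of_le_of_lt (hp a ha) (hq b hb)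

theorem DegLt.mul_le {p q : MvPolynomial σ K} {A B : ℕ} (hp : DegLt w p A) (hq : DegLe w q B) :
    DegLt w (p * q) (A + B) := by
  classical
  intro s hs
  rcases Finset.mem_add.1 (MvPolynomial.support_mul p q hs) with ⟨a, ha, b, hb, rfl⟩
  rw [map_add]
  exact add_lt_add_of_lt_of_le (hp a ha) (hq b hb)

theorem weight_single (v : σ) (D : ℕ) :
    Finsupp.weight w (Finsupp.single v D) = D * w v := by
  rw [Finsupp.weight_apply, Finsupp.sum_single_index] <;> simp

theorem degLe_monomial (s : σ →₀ ℕ) (c : K) :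
    DegLe w (monomial s c) (Finsupp.weight w s) := by
  intro t ht
  have := MvPolynomial.support_monomial_subset ht
  rw [Finset.mem_singleton] at this
  subst this; exact le_rfl

theorem degLe_X_pow (v : σ) (D : ℕ) : DegLe w ((X v : MvPolynomial σ K) ^ D) (w v * D) := by
  rw [X_pow_eq_monomial]
  have := degLe_monomial (w := w) (Finsupp.single v D) (1 : K)
  rwa [weight_single, mul_comm] at this

theorem degLe_one : DegLe w (1 : MvPolynomial σ K) 0 := by
  have h := degLe_monomial (w := w) (0 : σ →₀ ℕ) (1 : K)
  rw [map_zero] at h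
  rwa [← C_apply, C_1] at h

theorem DegLe.pow {p : MvPolynomial σ K} {A : ℕ} (h : DegLe w p A) (j : ℕ) :
    DegLe w (p ^ j) (j * A) := by
  induction j with
  | zero =>
    rw [pow_zero, Nat.zero_mul]
    exact degLe_one
  | succ j ih =>
    have := ih.mul h
    rw [pow_succ, Nat.succ_mul]
    exact this

theorem DegLt.sum {ι : Type*} {t : Finset ι} {f : ι → MvPolynomial σ K} {N : ℕ}
    (h : ∀ i ∈ t, DegLt w (f i) N) : DegLt w (∑ i ∈ t, f i) N := by
  classical
  induction t using Finset.induction_on with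
  | empty => simpa using DegLt.zero N
  | insert _ _ hnotmem ih =>
    rw [Finset.sum_insert hnotmem]
    exact (h _ (Finset.mem_insert_self _ _)).add
      (ih fun i hi => h i (Finset.mem_insert_of_mem hi))

/-- `p = X v ^ D + (terms of weighted degree < w v * D)`. -/
def Lead (w : σ → ℕ) (v : σ) (p : MvPolynomial σ K) (D : ℕ) : Prop :=
  ∃ r, p = X v ^ D + r ∧ DegLt w r (w v * D)

theorem Lead.degLe {v : σ} {p : MvPolynomial σ K} {D : ℕ} (h : Lead w v p D) :
    DegLe w p (w v * D) := by
  obtain ⟨r, rfl, hr⟩ := h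
  intro s hs
  classical
  rcases Finset.mem_union.1 (MvPolynomial.support_add hs) with h | h
  · exact degLe_X_pow v D s h
  · exact le_of_lt (hr s h)

theorem Lead.mul {v : σ} {p q : MvPolynomial σ K} {D D' : ℕ}
    (hp : Lead w v p D) (hq : Lead w v q D') : Lead w v (p * q) (D + D') := by
  obtain ⟨r, hpe, hr⟩ := hp
  obtain ⟨s, hqe, hs⟩ := hq
  refine ⟨X v ^ D * s + r * q, ?_, ?_⟩
  · rw [hpe, hqe, pow_add]; ring
  · apply DegLt.add
    · rw [mul_add]
      exact (degLe_X_pow v D).mul_lt hs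
    · rw [mul_add]
      exact hr.mul_le (Lead.degLe ⟨s, hqe, hs⟩)

theorem Lead.one {v : σ} : Lead w v (1 : MvPolynomial σ K) 0 :=
  ⟨0, by simp, DegLt.zero _⟩

theorem Lead.pow {v : σ} {p : MvPolynomial σ K} {D : ℕ} (hp : Lead w v p D) (j : ℕ) :
    Lead w v (p ^ j) (j * D) := by
  induction j with
  | zero => simpa using Lead.one
  | succ j ih =>
    have := ih.mul hp
    rw [pow_succ, Nat.succ_mul]
    exact this


theorem nat_f_low {d e n j : ℕ} (he : 2 ≤ e) (hed : e ≤ d) (hj : j < d) :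
    (d - j) + (j * (e * d ^ n) + (d - j) * (e * (d ^ n - e ^ n))) < e * d ^ (n + 1) := by
  have hBA : e ^ n ≤ d ^ n := Nat.pow_le_pow_left hed n
  have hB1 : 1 ≤ e ^ n := Nat.one_le_pow _ _ (by omega)
  obtain ⟨C, hC⟩ : ∃ C, d ^ n = C + e ^ n := ⟨d ^ n - e ^ n, by omega⟩
  obtain ⟨t, ht⟩ : ∃ t, d = j + (t + 1) := ⟨d - j - 1, by omega⟩
  rw [pow_succ, hC, Nat.add_sub_cancel, ht, Nat.add_sub_cancel_left]
  set B := e ^ n with hB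
  have key : t + 1 < (t + 1) * (e * B) := by
    have h2 : 2 ≤ e * B := le_trans he (Nat.le_mul_of_pos_right e (by omega))
    nlinarith
  nlinarith [key]

theorem nat_g_top {d e n : ℕ} (he : 2 ≤ e) (hed : e ≤ d) :
    (d - e) * d ^ n + e * (d ^ n - e ^ n) = d ^ (n + 1) - e ^ (n + 1) := by
  have hBA : e ^ n ≤ d ^ n := Nat.pow_le_pow_left hed n
  obtain ⟨C, hC⟩ : ∃ C, d ^ n = C + e ^ n := ⟨d ^ n - e ^ n, by omega⟩
  obtain ⟨t, ht⟩ : ∃ t, d = e + t := ⟨d - e, by omega⟩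
  rw [pow_succ, pow_succ, hC, Nat.add_sub_cancel, ht, Nat.add_sub_cancel_left]
  set B := e ^ n with hB
  have h1 : B * e ≤ (C + B) * (e + t) := by nlinarith
  zify [h1]
  ring

theorem nat_g_low {d e n j : ℕ} (he : 2 ≤ e) (hed : e ≤ d) (hj : j < d - e) :
    (d - e - j) + (j * (e * d ^ n) + (d - j) * (e * (d ^ n - e ^ n)))
      < e * (d ^ (n + 1) - e ^ (n + 1)) := by
  have hBA : e ^ n ≤ d ^ n := Nat.pow_le_pow_left hed n
  have hB1 : 1 ≤ e ^ n := Nat.one_le_pow _ _ (by omega)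
  obtain ⟨C, hC⟩ : ∃ C, d ^ n = C + e ^ n := ⟨d ^ n - e ^ n, by omega⟩
  obtain ⟨u, hu⟩ : ∃ u, d = e + (j + (u + 1)) := ⟨d - e - j - 1, by omega⟩
  rw [pow_succ, pow_succ, hC, Nat.add_sub_cancel, hu]
  set B := e ^ n with hB
  have h1 : B * e ≤ (C + B) * (e + (j + (u + 1))) := by nlinarith
  have key : ((u : ℤ) + 1) < e * (B * (u + 1)) := by
    have h3 : (u + 1 : ℕ) < e * (B * (u + 1)) := by
      have h4 : 2 * (1 * (u + 1)) ≤ e * (B * (u + 1)) :=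
        Nat.mul_le_mul he (Nat.mul_le_mul hB1 (le_refl (u + 1)))
      linarith
    exact_mod_cast h3
  zify [h1, show e ≤ e + (j + (u + 1)) by omega, show j ≤ e + (j + (u + 1)) - e by omega,
    show j ≤ e + (j + (u + 1)) by omega]
  nlinarith [key]


theorem final_lemma (v : σ) (c : K) (hc : c ≠ 0) (D N : ℕ) (hN : N = w v * D)
    (r p : MvPolynomial σ K) (hp : p = C c * X v ^ D + r) (hr : DegLt w r N) :
    weightedTotalDegree w p = N ∧
      weightedHomogeneousComponent w N p = C c * X v ^ D := by
  classical
  have hM : C c * X v ^ D = monomial (Finsupp.single v D) c := by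
    rw [X_pow_eq_monomial, C_mul_monomial, mul_one]
  have hw : Finsupp.weight w (Finsupp.single v D) = N := by
    rw [weight_single, hN, mul_comm]
  have hcr : coeff (Finsupp.single v D) r = 0 := by
    by_contra h
    have := hr _ (mem_support_iff.2 h)
    rw [hw] at this
    exact lt_irrefl _ this
  have hcp : coeff (Finsupp.single v D) p = c := by
    rw [hp, hM, coeff_add, coeff_monomial, if_pos rfl, hcr, add_zero]
  have hmem : Finsupp.single v D ∈ p.support := mem_support_iff.2 (by rw [hcp]; exact hc)
  have hub : ∀ s ∈ p.support, Finsupp.weight w s ≤ N := by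
    intro s hs
    rw [hp, hM] at hs
    rcases Finset.mem_union.1 (MvPolynomial.support_add hs) with h | h
    · have := MvPolynomial.support_monomial_subset h
      rw [Finset.mem_singleton] at this
      rw [this, hw]
    · exact le_of_lt (hr s h)
  constructor
  · refine le_antisymm ?_ ?_
    · rw [weightedTotalDegree]
      exact Finset.sup_le hub
    · have := le_weightedTotalDegree w hmem
      rwa [hw] at this
  · rw [hp, map_add]
    have h1 : weightedHomogeneousComponent w N (C c * X v ^ D) = C c * X v ^ D := by
      rw [hM]
      exact (isWeightedHomogeneous_monomial _ _ _ hw).weightedHomogeneousComponent_same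
    have h2 : weightedHomogeneousComponent w N r = 0 := by
      apply weightedHomogeneousComponent_eq_zero'
      intro s hs
      exact ne_of_lt (hr s hs)
    rw [h1, h2, add_zero]

end Stmt4Aux


open Stmt4Aux in
theorem lead_FG (k : Type) [Field k] (d e : ℕ) (hd : 2 ≤ d) (he : 2 ≤ e) (hed : e ≤ d)
    (i : Fin (2 * d - 1 - e)) (n : ℕ) :
    Lead (wt d e) (Sum.inl (Sum.inr i)) (FG k d e n (xi k d e i)).1 (d ^ n) ∧
      Lead (wt d e) (Sum.inl (Sum.inr i)) (FG k d e n (xi k d e i)).2 (d ^ n - e ^ n) := by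
  set v : Vars d e := Sum.inl (Sum.inr i) with hv
  have hwv : wt d e v = e := rfl
  induction n with
  | zero =>
    constructor
    · refine ⟨0, ?_, DegLt.zero _⟩
      simp [FG, xi, pow_one, hv]
    · refine ⟨0, ?_, DegLt.zero _⟩
      simp [FG]
  | succ n ih =>
    obtain ⟨Lf, Lg⟩ := ih
    have hBA : e ^ n ≤ d ^ n := Nat.pow_le_pow_left hed n
    have hcA : ∀ j, DegLe (wt d e) (coefA k d e j) (d - j) := by
      intro j
      unfold coefA
      split_ifs with h1 h2
      · exact degLe_one.mono (Nat.zero_le _)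
      · have hwj : wt d e (Sum.inr (Sum.inl ⟨j - 1, by omega⟩)) = d - j := by
          show d - (j - 1 + 1) = d - j
          omega
        have := degLe_X_pow (K := k) (w := wt d e) (Sum.inr (Sum.inl ⟨j - 1, by omega⟩)) 1
        rw [pow_one, hwj, mul_one] at this
        exact this
      · intro s hs; simp at hs
    have hcB : ∀ j, DegLe (wt d e) (coefB k d e j) (d - e - j) := by
      intro j
      unfold coefB
      split_ifs with h1 h2
      · exact degLe_one.mono (Nat.zero_le _)
      · have hwj : wt d e (Sum.inr (Sum.inr ⟨j, h2⟩)) = d - e - j := rfl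
        have := degLe_X_pow (K := k) (w := wt d e) (Sum.inr (Sum.inr ⟨j, h2⟩)) 1
        rw [pow_one, hwj, mul_one] at this
        exact this
      · intro s hs; simp at hs
    have hFle : DegLe (wt d e) (FG k d e n (xi k d e i)).1 (e * d ^ n) := by
      have := Lf.degLe; rwa [hwv] at this
    have hGle : DegLe (wt d e) (FG k d e n (xi k d e i)).2 (e * (d ^ n - e ^ n)) := by
      have := Lg.degLe; rwa [hwv] at this
    have hterm : ∀ (c : MvPolynomial (Vars d e) k) (Dc j : ℕ), DegLe (wt d e) c Dc →
        DegLe (wt d e) (c * (FG k d e n (xi k d e i)).1 ^ j *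
            (FG k d e n (xi k d e i)).2 ^ (d - j))
          (Dc + (j * (e * d ^ n) + (d - j) * (e * (d ^ n - e ^ n)))) := by
      intro c Dc j hc
      have := (hc.mul (hFle.pow j)).mul (hGle.pow (d - j))
      exact this.mono (le_of_eq (add_assoc _ _ _))
    constructor
    · -- the f-component
      have hf1 : (FG k d e (n + 1) (xi k d e i)).1 =
          ∑ j ∈ Finset.range (d + 1), coefA k d e j * (FG k d e n (xi k d e i)).1 ^ j *
            (FG k d e n (xi k d e i)).2 ^ (d - j) := rfl
      have htop : coefA k d e d * (FG k d e n (xi k d e i)).1 ^ d *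
          (FG k d e n (xi k d e i)).2 ^ (d - d) = (FG k d e n (xi k d e i)).1 ^ d := by
        simp [coefA, Nat.sub_self]
      obtain ⟨r, hre, hrd⟩ := Lf.pow d
      have hexp : d * d ^ n = d ^ (n + 1) := by rw [pow_succ]; ring
      rw [hexp] at hre hrd
      refine ⟨(∑ j ∈ Finset.range d, coefA k d e j * (FG k d e n (xi k d e i)).1 ^ j *
          (FG k d e n (xi k d e i)).2 ^ (d - j)) + r, ?_, ?_⟩
      · rw [hf1, Finset.sum_range_succ, htop, hre]; ring
      · rw [hwv]
        apply DegLt.add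
        · apply DegLt.sum
          intro j hj
          rw [Finset.mem_range] at hj
          exact (hterm _ _ j (hcA j)).of_lt (nat_f_low he hed hj)
        · rwa [hwv] at hrd
    · -- the g-component
      have hg1 : (FG k d e (n + 1) (xi k d e i)).2 =
          ∑ j ∈ Finset.range (d - e + 1), coefB k d e j * (FG k d e n (xi k d e i)).1 ^ j *
            (FG k d e n (xi k d e i)).2 ^ (d - j) := rfl
      have hde : d - (d - e) = e := Nat.sub_sub_self hed
      have htop : coefB k d e (d - e) * (FG k d e n (xi k d e i)).1 ^ (d - e) *
          (FG k d e n (xi k d e i)).2 ^ (d - (d - e)) =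
          (FG k d e n (xi k d e i)).1 ^ (d - e) * (FG k d e n (xi k d e i)).2 ^ e := by
        rw [hde]; simp [coefB]
      have hLtop := (Lf.pow (d - e)).mul (Lg.pow e)
      rw [nat_g_top he hed] at hLtop
      obtain ⟨r, hre, hrd⟩ := hLtop
      refine ⟨(∑ j ∈ Finset.range (d - e), coefB k d e j * (FG k d e n (xi k d e i)).1 ^ j *
          (FG k d e n (xi k d e i)).2 ^ (d - j)) + r, ?_, ?_⟩
      · rw [hg1, Finset.sum_range_succ, htop, hre]; ring
      · rw [hwv]
        apply DegLt.add
        · apply DegLt.sum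
          intro j hj
          rw [Finset.mem_range] at hj
          exact (hterm _ _ j (hcB j)).of_lt (nat_g_low he hed hj)
        · rwa [hwv] at hrd

/-- for `n > m ≥ 1` and `1 ≤ i ≤ N`, the element
`P_i = f_{m-1}(ξ_i) g_{n-1}(ξ_i) - f_{n-1}(ξ_i) g_{m-1}(ξ_i)` has weighted total degree
`e (d^{n-1} + d^{m-1} - e^{m-1})`, and its leading form is `-ξ_i^{d^{n-1}+d^{m-1}-e^{m-1}}`. -/
theorem stmt4 (k : Type) [Field k] (d e : ℕ) (hd : 2 ≤ d) (he : 2 ≤ e) (hed : e ≤ d)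
    (m n : ℕ) (hm : 1 ≤ m) (hmn : m < n) (i : Fin (2 * d - 1 - e)) :
    weightedTotalDegree (wt d e)
        ((FG k d e (m - 1) (xi k d e i)).1 * (FG k d e (n - 1) (xi k d e i)).2 -
          (FG k d e (n - 1) (xi k d e i)).1 * (FG k d e (m - 1) (xi k d e i)).2) =
      e * (d ^ (n - 1) + d ^ (m - 1) - e ^ (m - 1)) ∧
    leadForm k d e
        ((FG k d e (m - 1) (xi k d e i)).1 * (FG k d e (n - 1) (xi k d e i)).2 -
          (FG k d e (n - 1) (xi k d e i)).1 * (FG k d e (m - 1) (xi k d e i)).2) =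
      -(xi k d e i) ^ (d ^ (n - 1) + d ^ (m - 1) - e ^ (m - 1)) := by
  obtain ⟨m', rfl⟩ : ∃ m', m = m' + 1 := ⟨m - 1, by omega⟩
  obtain ⟨n', rfl⟩ : ∃ n', n = n' + 1 := ⟨n - 1, by omega⟩
  have hmn' : m' < n' := by omega
  simp only [Nat.add_sub_cancel]
  set v : Vars d e := Sum.inl (Sum.inr i) with hv
  have hwv : wt d e v = e := rfl
  obtain ⟨Lfm, Lgm⟩ := lead_FG k d e hd he hed i m'
  obtain ⟨Lfn, Lgn⟩ := lead_FG k d e hd he hed i n'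
  have hbB : e ^ m' < e ^ n' := Nat.pow_lt_pow_right (by omega) hmn'
  have hBA : e ^ n' ≤ d ^ n' := Nat.pow_le_pow_left hed n'
  have hba : e ^ m' ≤ d ^ m' := Nat.pow_le_pow_left hed m'
  have haA : d ^ m' ≤ d ^ n' := Nat.pow_le_pow_right (by omega) (by omega)
  set D1 : ℕ := d ^ m' + (d ^ n' - e ^ n') with hD1
  set D : ℕ := d ^ n' + (d ^ m' - e ^ m') with hD
  have hD1D : D1 < D := by omega
  have hDeq : d ^ (n') + d ^ (m') - e ^ (m') = D := by omega
  obtain ⟨r1, h1e, h1d⟩ := Lfm.mul Lgn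
  obtain ⟨r2, h2e, h2d⟩ := Lfn.mul Lgm
  rw [hwv] at h1d h2d
  set P : MvPolynomial (Vars d e) k :=
    (FG k d e m' (xi k d e i)).1 * (FG k d e n' (xi k d e i)).2 -
      (FG k d e n' (xi k d e i)).1 * (FG k d e m' (xi k d e i)).2 with hP
  have hPe : P = C (-1 : k) * X v ^ D + (X v ^ D1 + r1 - r2) := by
    rw [hP, h1e, h2e]
    have : (C (-1 : k) : MvPolynomial (Vars d e) k) = -1 := by simp
    rw [this]; ring
  have hrlt : Stmt4Aux.DegLt (wt d e) (X v ^ D1 + r1 - r2) (e * D) := by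
    have hXD1 : Stmt4Aux.DegLt (wt d e) ((X v : MvPolynomial (Vars d e) k) ^ D1) (e * D) := by
      have := Stmt4Aux.degLe_X_pow (K := k) (w := wt d e) v D1
      rw [hwv] at this
      refine this.of_lt ?_
      have h0 : 0 < e := by omega
      exact Nat.mul_lt_mul_of_le_of_lt (le_refl e) hD1D h0
    have h1d' : Stmt4Aux.DegLt (wt d e) r1 (e * D) :=
      h1d.mono (Nat.mul_le_mul_left e (le_of_lt hD1D))
    have := (hXD1.add h1d').add h2d.neg
    rwa [← sub_eq_add_neg] at this
  have hfin := Stmt4Aux.final_lemma (w := wt d e) v (-1 : k) (by norm_num) D (e * D)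
    (by rw [hwv]) (X v ^ D1 + r1 - r2) P hPe ?hrw
  case hrw => exact hrlt
  obtain ⟨hdeg, hcomp⟩ := hfin
  constructor
  · rw [hdeg, hDeq]
  · rw [leadForm, hdeg, hcomp, hDeq]
    have : (C (-1 : k) : MvPolynomial (Vars d e) k) = -1 := by simp
    rw [this, xi]
    ring
end

section
/- Let f be a polynomial over k, let n ≥ 1, and let z ∈ k satisfy f^{∘n}(z) = z. Then the derivative of f^{∘n} evaluated at f(z) equals the derivative of f^{∘n} evaluated at z; that is, the multiplier is the same at every point of a single periodic cycle. -/
open Polynomial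

/-- The `n`-fold composition `f^{∘n}` of a polynomial with itself, with `f^{∘0} = X`. -/
noncomputable def iterComp {k : Type*} [CommRing k] (f : Polynomial k) : ℕ → Polynomial k
  | 0 => X
  | n + 1 => (iterComp f n).comp f

lemma iterComp_eval_succ {k : Type*} [CommRing k] (f : Polynomial k) (m : ℕ) (w : k) :
    (iterComp f (m + 1)).eval w = (iterComp f m).eval (f.eval w) := by
  simp [iterComp, eval_comp]

lemma deriv_iterComp {k : Type*} [CommRing k] (f : Polynomial k) (m : ℕ) (w : k) :
    (derivative (iterComp f m)).eval w =
      ∏ i ∈ Finset.range m, (derivative f).eval ((iterComp f i).eval w) := by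
  induction m generalizing w with
  | zero => simp [iterComp]
  | succ m ih =>
    rw [show iterComp f (m + 1) = (iterComp f m).comp f from rfl, derivative_comp]
    rw [Finset.prod_range_succ']
    simp only [eval_mul, eval_comp, ih (f.eval w)]
    rw [mul_comm]
    congr 1
    · refine Finset.prod_congr rfl fun i _ => ?_
      rw [← iterComp_eval_succ]
    · simp [iterComp]

/-- if `f^{∘n}(z) = z` then `(f^{∘n})'(f(z)) = (f^{∘n})'(z)`: the multiplier is
the same at every point of a single periodic cycle. -/
theorem stmt12 {k : Type*} [CommRing k] (f : Polynomial k) (n : ℕ) (hn : 1 ≤ n)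
    (z : k) (hz : (iterComp f n).eval z = z) :
    (derivative (iterComp f n)).eval (f.eval z) = (derivative (iterComp f n)).eval z := by
  set b : ℕ → k := fun i => (derivative f).eval ((iterComp f i).eval z) with hb
  have hb0 : b n = b 0 := by simp [hb, hz, iterComp]
  rw [deriv_iterComp, deriv_iterComp]
  have hL : ∀ i, (derivative f).eval ((iterComp f i).eval (f.eval z)) = b (i + 1) := by
    intro i; rw [hb, ← iterComp_eval_succ]
  simp only [hL]
  -- reindex over Fin n with rotation
  have hne : NeZero n := ⟨by omega⟩
  rw [← Fin.prod_univ_eq_prod_range (fun i => b (i + 1)) n,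
      ← Fin.prod_univ_eq_prod_range b n]
  have key : ∀ j : Fin n, b (j.val + 1) = b ((j + 1 : Fin n).val) := by
    intro j
    rcases eq_or_lt_of_le (Nat.succ_le_of_lt j.isLt) with h | h
    · have : ((j + 1 : Fin n)).val = 0 := by
        rw [Fin.add_def]; simp [← h]
      rw [this, show j.val + 1 = n from h, hb0]
    · have : ((j + 1 : Fin n)).val = j.val + 1 := by
        rw [Fin.add_def]; simp [Nat.mod_eq_of_lt h]
      rw [this]
  simp only [key]
  exact Equiv.prod_comp (Equiv.addRight (1 : Fin n)) (fun j => b j.val)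
end
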